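/- Assume that every direct sum of pure-injective R-modules is pure-injective. If A and B are pure-injective R-modules and there exist pure embeddings f : A → B and g : B → A, then A and B are isomorphic as R-modules. -/

import Mathlib

universe u

/-- `A` is a pure submodule of its ambient module: every finite system of
`R`-linear equations `∑ j, r i j • x j = a i` with constants `a i ∈ A` that has
a solution in the ambient module has a solution in `A`. -/
def IsPureSubmodule {R : Type*} [Ring R] {M : Type*} [AddCommGroup M] [Module R M]
    (A : Submodule R M) : Prop :=
  ∀ (m n : ℕ) (r : Fin m → Fin n → R) (a : Fin m → M),
    (∀ i, a i ∈ A) →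
    (∃ x : Fin n → M, ∀ i, (∑ j, r i j • x j) = a i) →
    ∃ x : Fin n → M, (∀ j, x j ∈ A) ∧ ∀ i, (∑ j, r i j • x j) = a i

/-- A pure embedding is an injective linear map whose image is a pure submodule
of its codomain. -/
def IsPureEmbedding {R : Type*} [Ring R] {M N : Type*} [AddCommGroup M] [Module R M]
    [AddCommGroup N] [Module R N] (f : M →ₗ[R] N) : Prop :=
  Function.Injective f ∧ IsPureSubmodule (LinearMap.range f)

/-- `E` is pure-injective: every homomorphism `g : A → E` extends along every
pure embedding `f : A → B`. -/
def PureInjective (R : Type u) [Ring R] (E : Type u) [AddCommGroup E] [Module R E] : Prop :=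
  ∀ (A B : Type u) [AddCommGroup A] [Module R A] [AddCommGroup B] [Module R B]
    (f : A →ₗ[R] B), IsPureEmbedding f →
    ∀ g : A →ₗ[R] E, ∃ h : B →ₗ[R] E, h.comp f = g

section Aux

variable {R : Type u} [Ring R]

theorem pureInjective_of_retract {X E : Type u} [AddCommGroup X] [Module R X]
    [AddCommGroup E] [Module R E] (i : X →ₗ[R] E) (p : E →ₗ[R] X)
    (hpi : p.comp i = LinearMap.id) (hE : PureInjective R E) : PureInjective R X := by
  intro A B _ _ _ _ f hf g
  obtain ⟨h, hh⟩ := hE A B f hf (i.comp g)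
  refine ⟨p.comp h, ?_⟩
  rw [LinearMap.comp_assoc, hh, ← LinearMap.comp_assoc, hpi, LinearMap.id_comp]

theorem pureInjective_of_equiv {X E : Type u} [AddCommGroup X] [Module R X]
    [AddCommGroup E] [Module R E] (e : E ≃ₗ[R] X) (hE : PureInjective R E) :
    PureInjective R X := by
  refine pureInjective_of_retract (e.symm : X →ₗ[R] E) (e : E →ₗ[R] X) ?_ hE
  ext x; simp

theorem pureInjective_prod {X Y : Type u} [AddCommGroup X] [Module R X]
    [AddCommGroup Y] [Module R Y] (hX : PureInjective R X) (hY : PureInjective R Y) :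
    PureInjective R (X × Y) := by
  intro A B _ _ _ _ f hf g
  obtain ⟨h₁, hh₁⟩ := hX A B f hf ((LinearMap.fst R X Y).comp g)
  obtain ⟨h₂, hh₂⟩ := hY A B f hf ((LinearMap.snd R X Y).comp g)
  refine ⟨h₁.prod h₂, ?_⟩
  ext a
  · exact congrFun (congrArg DFunLike.coe hh₁) a
  · exact congrFun (congrArg DFunLike.coe hh₂) a

theorem isPureSubmodule_of_proj {M : Type*} [AddCommGroup M] [Module R M]
    (S : Submodule R M) (π : M →ₗ[R] M)
    (h1 : ∀ s ∈ S, π s = s) (h2 : ∀ x, π x ∈ S) : IsPureSubmodule S := by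
  rintro m n r a ha ⟨x, hx⟩
  refine ⟨fun j => π (x j), fun j => h2 _, fun i => ?_⟩
  rw [← h1 _ (ha i), ← hx i, map_sum]
  simp only [map_smul]

end Aux

section Aux2
variable {R : Type u} [Ring R]

/-- A pure submodule that is pure-injective admits a retraction. -/
theorem exists_retraction {A : Type u} [AddCommGroup A] [Module R A]
    (C : Submodule R A) (hp : IsPureSubmodule C) (hC : PureInjective R C) :
    ∃ π : A →ₗ[R] C, ∀ x : C, π x = x := by
  have hemb : IsPureEmbedding C.subtype := by
    refine ⟨C.injective_subtype, ?_⟩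
    rw [Submodule.range_subtype]; exact hp
  obtain ⟨h, hh⟩ := hC C A C.subtype hemb LinearMap.id
  exact ⟨h, fun x => congrFun (congrArg DFunLike.coe hh) x⟩


/-- Composition of pure embeddings is a pure embedding. -/
theorem IsPureEmbedding.comp {A B C : Type*} [AddCommGroup A] [Module R A]
    [AddCommGroup B] [Module R B] [AddCommGroup C] [Module R C]
    {f : A →ₗ[R] B} {g : B →ₗ[R] C} (hf : IsPureEmbedding f) (hg : IsPureEmbedding g) :
    IsPureEmbedding (g.comp f) := by
  refine ⟨hg.1.comp hf.1, ?_⟩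
  rintro m n r a ha hx
  choose w hw using ha
  obtain ⟨x, hxg, hxeq⟩ := hg.2 m n r a (fun i => ⟨f (w i), hw i⟩) hx
  choose y hy using hxg
  have hy2 : ∀ i, (∑ j, r i j • y j) = f (w i) := by
    intro i
    apply hg.1
    rw [map_sum]
    simp only [map_smul, hy]
    rw [hxeq i, ← hw i]
    rfl
  obtain ⟨y', hy'f, hy'eq⟩ := hf.2 m n r (fun i => f (w i))
    (fun i => LinearMap.mem_range_self f (w i)) ⟨y, hy2⟩
  refine ⟨fun j => g (y' j), fun j => ?_, fun i => ?_⟩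
  · obtain ⟨u, hu⟩ := hy'f j
    exact ⟨u, by simp [LinearMap.comp_apply, hu]⟩
  · have : (∑ j, r i j • g (y' j)) = g (∑ j, r i j • y' j) := by
      rw [map_sum]; simp only [map_smul]
    rw [this, hy'eq i, ← hw i]
    rfl

/-- Purity passes to an intermediate submodule. -/
theorem isPureSubmodule_comap_subtype {A : Type*} [AddCommGroup A] [Module R A]
    {H C : Submodule R A} (hHC : H ≤ C) (hH : IsPureSubmodule H) :
    IsPureSubmodule (H.comap C.subtype) := by
  rintro m n r a ha ⟨x, hx⟩
  have hx' : ∃ x' : Fin n → A, ∀ i, (∑ j, r i j • x' j) = ((a i : A)) := by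
    refine ⟨fun j => (x j : A), fun i => ?_⟩
    have := congrArg (Submodule.subtype C) (hx i)
    rw [map_sum] at this
    simp only [map_smul] at this
    exact this
  obtain ⟨y, hyH, hyeq⟩ := hH m n r (fun i => (a i : A)) (fun i => ha i) hx'
  refine ⟨fun j => ⟨y j, hHC (hyH j)⟩, fun j => hyH j, fun i => ?_⟩
  apply Subtype.ext
  rw [← hyeq i]
  push_cast
  rfl

end Aux2

section Core
variable {R : Type u} [Ring R] {P A : Type u}
  [AddCommGroup P] [Module R P] [AddCommGroup A] [Module R A]

theorem core (σ : (P × A) ≃ₗ[R] A) (hQ : PureInjective R (ℕ →₀ P)) :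
    ∃ W : Submodule R A, Nonempty (((ℕ →₀ P) × ↥W) ≃ₗ[R] A) := by
  classical
  set i0 : P →ₗ[R] A := σ.toLinearMap ∘ₗ LinearMap.inl R P A with hi0
  set t : A →ₗ[R] A := σ.toLinearMap ∘ₗ LinearMap.inr R P A with ht
  have hσ : ∀ (p : P) (a : A), σ (p, a) = i0 p + t a := by
    intro p a
    have h : (p, a) = ((p, 0) : P × A) + (0, a) := by simp
    rw [h, map_add]; rfl
  set j : ℕ → (P →ₗ[R] A) := fun n => Nat.rec i0 (fun _ jn => t ∘ₗ jn) n with hj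
  have hj0 : ∀ p, j 0 p = i0 p := fun _ => rfl
  have hjs : ∀ n p, j (n + 1) p = t (j n p) := fun _ _ => rfl
  set θ : (ℕ →₀ P) →ₗ[R] A := Finsupp.lsum ℕ j with hθ
  have hθsingle : ∀ n p, θ (Finsupp.single n p) = j n p := by
    intro n p; simp [hθ]
  set tl : (ℕ →₀ P) →ₗ[R] (ℕ →₀ P) :=
    Finsupp.lcomapDomain Nat.succ Nat.succ_injective with htl
  have htl_apply : ∀ (q : ℕ →₀ P) (n : ℕ), tl q n = q (n + 1) := fun q n => rfl
  have htl0 : ∀ p : P, tl (Finsupp.single 0 p) = 0 := by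
    intro p
    ext n
    rw [htl_apply]
    simp [Finsupp.single_apply]
  have htls : ∀ (n : ℕ) (p : P), tl (Finsupp.single (n + 1) p) = Finsupp.single n p := by
    intro n p
    ext m
    rw [htl_apply]
    simp [Finsupp.single_apply, Nat.succ_inj]
  have hdec : ∀ q : ℕ →₀ P, θ q = σ (q 0, θ (tl q)) := by
    have : θ = σ.toLinearMap ∘ₗ ((Finsupp.lapply 0).prod (θ ∘ₗ tl)) := by
      apply Finsupp.lhom_ext
      intro n p
      cases n with
      | zero =>
        simp only [LinearMap.comp_apply, LinearMap.prod_apply, Function.prod,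
          Finsupp.lapply_apply, LinearEquiv.coe_coe]
        rw [hθsingle, hj0, htl0, Finsupp.single_eq_same]
        rw [show θ (0 : ℕ →₀ P) = 0 from map_zero θ]
        rw [hσ p 0]
        rw [show t (0 : A) = 0 from map_zero t, add_zero]
      | succ n =>
        simp only [LinearMap.comp_apply, LinearMap.prod_apply, Function.prod,
          Finsupp.lapply_apply, LinearEquiv.coe_coe]
        rw [hθsingle, hjs, htls, hθsingle, Finsupp.single_eq_of_ne' (by omega), hσ,
          map_zero, zero_add]
    intro q
    conv_lhs => rw [this]
    rfl
  have hzero : ∀ (N : ℕ) (q : ℕ →₀ P), q.support ⊆ Finset.range N → θ q = 0 → q = 0 := by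
    intro N
    induction N with
    | zero =>
      intro q hs _
      have : q.support = ∅ := Finset.subset_empty.mp (by simpa using hs)
      exact Finsupp.support_eq_empty.mp this
    | succ N ih =>
      intro q hs h0
      rw [hdec q] at h0
      have h1 : ((q 0, θ (tl q)) : P × A) = 0 := by
        apply σ.injective
        rw [h0, map_zero]
      have hq0 : q 0 = 0 := congrArg Prod.fst h1
      have hθtl : θ (tl q) = 0 := congrArg Prod.snd h1
      have hts : (tl q).support ⊆ Finset.range N := by
        intro m hm
        rw [Finsupp.mem_support_iff, htl_apply] at hm
        have : m + 1 ∈ q.support := Finsupp.mem_support_iff.mpr hm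
        have := hs this
        rw [Finset.mem_range] at this ⊢
        omega
      have htlz := ih (tl q) hts hθtl
      ext n
      cases n with
      | zero => exact hq0
      | succ n =>
        have := congrFun (congrArg (DFunLike.coe) htlz) n
        rw [htl_apply] at this
        exact this
  have θinj : Function.Injective θ := by
    rw [← LinearMap.ker_eq_bot]
    rw [eq_bot_iff]
    intro q hq
    rw [LinearMap.mem_ker] at hq
    rw [Submodule.mem_bot]
    refine hzero (q.support.sup id + 1) q ?_ hq
    intro n hn
    rw [Finset.mem_range]
    exact Nat.lt_succ_of_le (Finset.le_sup (f := id) hn)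
  -- the chain of partial sums
  set S : ℕ → Submodule R A :=
    fun n => Nat.rec ⊥ (fun _ Sn => LinearMap.range i0 ⊔ Submodule.map t Sn) n with hS
  have hSs : ∀ n, S (n + 1) = LinearMap.range i0 ⊔ Submodule.map t (S n) := fun _ => rfl
  have hstep : ∀ n, S n ≤ S (n + 1) := by
    intro n
    induction n with
    | zero => exact bot_le
    | succ n ih =>
      exact sup_le_sup_left (Submodule.map_mono ih) _
  have hmono : Monotone S := monotone_nat_of_le_succ hstep
  have hproj : ∀ n, ∃ π : A →ₗ[R] A, (∀ s ∈ S n, π s = s) ∧ (∀ x, π x ∈ S n) := by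
    intro n
    induction n with
    | zero =>
      refine ⟨0, ?_, ?_⟩
      · intro s hs
        have hs0 : s = 0 := by
          have h' : s ∈ (⊥ : Submodule R A) := hs
          simpa using h'
        rw [hs0]
        simp
      · intro x
        exact Submodule.zero_mem (S 0)
    | succ n ih =>
      obtain ⟨π, hfix, hmem⟩ := ih
      refine ⟨σ.toLinearMap ∘ₗ (LinearMap.prodMap LinearMap.id π) ∘ₗ σ.symm.toLinearMap,
        ?_, ?_⟩
      · intro s hs
        rw [hSs] at hs
        rw [Submodule.mem_sup] at hs
        obtain ⟨u, hu, v, hv, rfl⟩ := hs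
        obtain ⟨p, rfl⟩ := hu
        obtain ⟨s', hs', rfl⟩ := hv
        have hsymm : σ.symm (i0 p + t s') = (p, s') := by
          rw [← hσ, σ.symm_apply_apply]
        simp only [LinearMap.comp_apply, LinearEquiv.coe_coe, hsymm]
        show σ (p, π s') = _
        rw [hfix s' hs', hσ]
      · intro x
        simp only [LinearMap.comp_apply, LinearEquiv.coe_coe]
        show σ ((σ.symm x).1, π (σ.symm x).2) ∈ _
        rw [hσ, hSs]
        exact Submodule.add_mem _
          (Submodule.mem_sup_left (LinearMap.mem_range_self _ _))
          (Submodule.mem_sup_right (Submodule.mem_map_of_mem (hmem _)))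
  have hSpure : ∀ n, IsPureSubmodule (S n) := by
    intro n
    obtain ⟨π, h1, h2⟩ := hproj n
    exact isPureSubmodule_of_proj _ π h1 h2
  have hjmem : ∀ n p, j n p ∈ S (n + 1) := by
    intro n
    induction n with
    | zero =>
      intro p
      rw [hSs]
      exact Submodule.mem_sup_left (by rw [hj0]; exact LinearMap.mem_range_self _ _)
    | succ n ih =>
      intro p
      rw [hjs]
      rw [hSs (n+1)]
      exact Submodule.mem_sup_right (Submodule.mem_map_of_mem (ih p))
  have hθmem : ∀ q : ℕ →₀ P, θ q ∈ S (q.support.sup id + 1) := by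
    intro q
    have : θ q = ∑ n ∈ q.support, j n (q n) := by
      simp [hθ, Finsupp.lsum_apply, Finsupp.sum]
    rw [this]
    apply Submodule.sum_mem
    intro n hn
    have hle : n + 1 ≤ q.support.sup id + 1 := by
      have h' : id n ≤ q.support.sup id := Finset.le_sup (f := id) hn
      simp only [id_eq] at h'
      omega
    exact hmono hle (hjmem n (q n))
  have hcomm : ∀ q : ℕ →₀ P, t (θ q) = θ (Finsupp.lmapDomain P R Nat.succ q) := by
    have : t ∘ₗ θ = θ ∘ₗ Finsupp.lmapDomain P R Nat.succ := by
      apply Finsupp.lhom_ext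
      intro n p
      simp only [LinearMap.comp_apply, Finsupp.lmapDomain_apply, Finsupp.mapDomain_single]
      rw [hθsingle, hθsingle, hjs]
    intro q
    exact congrFun (congrArg DFunLike.coe this) q
  have hSrange : ∀ n, S n ≤ LinearMap.range θ := by
    intro n
    induction n with
    | zero => exact bot_le
    | succ n ih =>
      rw [hSs]
      apply sup_le
      · rintro _ ⟨p, rfl⟩
        exact ⟨Finsupp.single 0 p, by rw [hθsingle, hj0]⟩
      · rintro _ ⟨s, hs, rfl⟩
        obtain ⟨q, rfl⟩ := ih hs
        exact ⟨Finsupp.lmapDomain P R Nat.succ q, (hcomm q).symm⟩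
  have hpure : IsPureSubmodule (LinearMap.range θ) := by
    rintro m n r a ha hx
    choose q hq using ha
    set N := Finset.univ.sup (fun i => (q i).support.sup id + 1) with hN
    have haS : ∀ i, a i ∈ S N := by
      intro i
      have h1 : θ (q i) ∈ S N := hmono (Finset.le_sup (Finset.mem_univ i)) (hθmem (q i))
      rw [hq i] at h1
      exact h1
    obtain ⟨y, hyS, hyeq⟩ := hSpure N m n r a haS hx
    exact ⟨y, fun j => hSrange N (hyS j), hyeq⟩
  have eθ : (ℕ →₀ P) ≃ₗ[R] LinearMap.range θ := LinearEquiv.ofInjective θ θinj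
  have hPIrange : PureInjective R (LinearMap.range θ) := pureInjective_of_equiv eθ hQ
  obtain ⟨π, hπ⟩ := exists_retraction (LinearMap.range θ) hpure hPIrange
  have hcompl := LinearMap.isCompl_of_proj hπ
  refine ⟨LinearMap.ker π, ⟨?_⟩⟩
  exact ((eθ.prodCongr (LinearEquiv.refl R (LinearMap.ker π)))).trans
    (Submodule.prodEquivOfIsCompl _ _ hcompl)

end Core

section FinsuppEquivs
variable {R : Type u} [Ring R]

/-- Splitting a finsupp of products. -/
noncomputable def finsuppProdSplit (ι : Type*) (M N : Type*) [AddCommGroup M] [Module R M]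
    [AddCommGroup N] [Module R N] :
    (ι →₀ (M × N)) ≃ₗ[R] (ι →₀ M) × (ι →₀ N) := by
  refine LinearEquiv.ofLinear
    ((Finsupp.mapRange.linearMap (LinearMap.fst R M N)).prod
      (Finsupp.mapRange.linearMap (LinearMap.snd R M N)))
    ((Finsupp.mapRange.linearMap (LinearMap.inl R M N)).comp (LinearMap.fst R _ _) +
      (Finsupp.mapRange.linearMap (LinearMap.inr R M N)).comp (LinearMap.snd R _ _))
    ?_ ?_
  · apply LinearMap.prod_ext <;>
    · apply Finsupp.lhom_ext
      intro a b
      ext i <;> by_cases h : a = i <;>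
        simp [Finsupp.single_apply, h, Finsupp.mapRange_apply]
  · apply Finsupp.lhom_ext
    intro a b
    ext i <;> by_cases h : a = i <;>
      simp [Finsupp.single_apply, h, Finsupp.mapRange_apply]

/-- Shift: `ℕ →₀ M` absorbs one extra copy of `M`. -/
noncomputable def finsuppNatShift (M : Type*) [AddCommGroup M] [Module R M] :
    (ℕ →₀ M) ≃ₗ[R] M × (ℕ →₀ M) :=
  (Finsupp.domLCongr Equiv.natEquivNatSumPUnit.{0}).trans <|
    (Finsupp.sumFinsuppLEquivProdFinsupp R).trans <|
      (LinearEquiv.prodComm R _ _).trans <|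
        LinearEquiv.prodCongr (Finsupp.LinearEquiv.finsuppUnique R M PUnit)
          (LinearEquiv.refl R (ℕ →₀ M))

/-- `ℕ →₀ M` is linearly equivalent to a `DirectSum` over `ULift ℕ`. -/
noncomputable def finsuppNatDirectSum (M : Type u) [AddCommGroup M] [Module R M] :
    (ℕ →₀ M) ≃ₗ[R] DirectSum (ULift.{u} ℕ) (fun _ => M) :=
  letI : (m : M) → Decidable (m ≠ 0) := fun m => Classical.dec _
  (Finsupp.domLCongr Equiv.ulift.symm).trans
    (finsuppLequivDFinsupp R :
      ((ULift.{u} ℕ) →₀ M) ≃ₗ[R] (DirectSum (ULift.{u} ℕ) (fun _ => M)))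

end FinsuppEquivs

theorem stmt17 (R : Type u) [Ring R]
    -- every direct sum of pure-injective `R`-modules is pure-injective
    (hsum : ∀ (ι : Type u) (M : ι → Type u) [∀ i, AddCommGroup (M i)] [∀ i, Module R (M i)],
      (∀ i, PureInjective R (M i)) → PureInjective R (DirectSum ι M))
    (A B : Type u) [AddCommGroup A] [Module R A] [AddCommGroup B] [Module R B]
    (hA : PureInjective R A) (hB : PureInjective R B)
    (hex : (∃ f : A →ₗ[R] B, IsPureEmbedding f) ∧ ∃ g : B →ₗ[R] A, IsPureEmbedding g) :
    Nonempty (A ≃ₗ[R] B) := by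
  classical
  obtain ⟨⟨f, hf⟩, ⟨g, hg⟩⟩ := hex
  have hgf : IsPureEmbedding (g.comp f) := hf.comp hg
  set h : A →ₗ[R] A := g.comp f with hh
  set C : Submodule R A := LinearMap.range g with hC
  set H : Submodule R A := LinearMap.range h with hH
  have hHC : H ≤ C := LinearMap.range_comp_le_range f g
  have eB : B ≃ₗ[R] C := LinearEquiv.ofInjective g hg.1
  have eA : A ≃ₗ[R] H := LinearEquiv.ofInjective h hgf.1
  have hPIC : PureInjective R C := pureInjective_of_equiv eB hB
  have hPIH : PureInjective R H := pureInjective_of_equiv eA hA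
  -- split C off A
  obtain ⟨πC, hπC⟩ := exists_retraction C hg.2 hPIC
  have hcomplC := LinearMap.isCompl_of_proj hπC
  set K : Submodule R A := LinearMap.ker πC with hK
  have eCK : (C × K) ≃ₗ[R] A := Submodule.prodEquivOfIsCompl _ _ hcomplC
  -- split H off C
  set H₁ : Submodule R C := H.comap C.subtype with hH₁
  have hH₁pure : IsPureSubmodule H₁ := isPureSubmodule_comap_subtype hHC hgf.2
  have eH₁ : H₁ ≃ₗ[R] H := Submodule.comapSubtypeEquivOfLe hHC
  have hPIH₁ : PureInjective R H₁ := pureInjective_of_equiv eH₁.symm hPIH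
  obtain ⟨πH, hπH⟩ := exists_retraction H₁ hH₁pure hPIH₁
  have hcomplH := LinearMap.isCompl_of_proj hπH
  set L : Submodule R C := LinearMap.ker πH with hL
  have eHL : (H₁ × L) ≃ₗ[R] C := Submodule.prodEquivOfIsCompl _ _ hcomplH
  have eH₁A : H₁ ≃ₗ[R] A := eH₁.trans eA.symm
  have eC2 : C ≃ₗ[R] (A × L) := eHL.symm.trans (eH₁A.prodCongr (LinearEquiv.refl R L))
  -- the swindle iso σ : (K × L) × A ≃ A
  have σ : ((K × L) × A) ≃ₗ[R] A :=
    (eCK.symm.trans <|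
      (eC2.prodCongr (LinearEquiv.refl R K)).trans <|
        (LinearEquiv.prodAssoc R A L K).trans <|
          (LinearEquiv.prodComm R A (L × K)).trans <|
            ((LinearEquiv.prodComm R L K).prodCongr (LinearEquiv.refl R A))).symm
  -- pure-injectivity of the building blocks
  have hPICK : PureInjective R (C × K) := pureInjective_of_equiv eCK.symm hA
  have hPIK : PureInjective R K :=
    pureInjective_of_retract (LinearMap.inr R C K) (LinearMap.snd R C K)
      (LinearMap.ext fun x => rfl) hPICK
  have hPIHL : PureInjective R (H₁ × L) := pureInjective_of_equiv eHL.symm hPIC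
  have hPIL : PureInjective R L :=
    pureInjective_of_retract (LinearMap.inr R H₁ L) (LinearMap.snd R H₁ L)
      (LinearMap.ext fun x => rfl) hPIHL
  have hPIP : PureInjective R (K × L) := pureInjective_prod hPIK hPIL
  have hPIQ : PureInjective R (ℕ →₀ (K × L)) := by
    have hds := hsum (ULift.{u} ℕ) (fun _ => (K × L)) (fun _ => hPIP)
    exact pureInjective_of_equiv (finsuppNatDirectSum (↥K × ↥L)).symm hds
  obtain ⟨W, ⟨eW⟩⟩ := core σ hPIQ
  -- absorption of L into ℕ →₀ (K × L)
  have eabs : (L × (ℕ →₀ (↥K × ↥L))) ≃ₗ[R] (ℕ →₀ (↥K × ↥L)) :=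
    ((LinearEquiv.refl R L).prodCongr (finsuppProdSplit ℕ ↥K ↥L)).trans <|
      ((LinearEquiv.refl R L).prodCongr (LinearEquiv.prodComm R (ℕ →₀ K) (ℕ →₀ L))).trans <|
        (LinearEquiv.prodAssoc R L (ℕ →₀ L) (ℕ →₀ K)).symm.trans <|
          (((finsuppNatShift ↥L).symm.prodCongr (LinearEquiv.refl R (ℕ →₀ K))).trans <|
            (LinearEquiv.prodComm R (ℕ →₀ L) (ℕ →₀ K)).trans
              (finsuppProdSplit ℕ (K : Type u) L).symm)
  -- B ≃ C ≃ A × L ≃ (Q × W) × L ≃ (L × Q) × W ≃ Q × W ≃ A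
  have efinal : B ≃ₗ[R] A :=
    eB.trans <| eC2.trans <|
      ((eW.symm.prodCongr (LinearEquiv.refl R L)).trans <|
        (LinearEquiv.prodAssoc R _ W L).trans <|
          (((LinearEquiv.refl R (ℕ →₀ (↥K × ↥L))).prodCongr
              (LinearEquiv.prodComm R W L)).trans <|
            (LinearEquiv.prodAssoc R _ L W).symm.trans <|
              (((LinearEquiv.prodComm R (ℕ →₀ (↥K × ↥L)) L).trans eabs).prodCongr
                (LinearEquiv.refl R W)).trans eW))
  exact ⟨efinal.symm⟩
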